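/- Assume a_n > 0 for all n and ∑_{n≥1} a_n < ∞, and let T = ∑_{n≥1} a_n κ_n θ_n. Then for every t ≥ 0, ℙ( T ≥ t ) ≥ ∑_{n≥1} (1−α) α^{n−1} e^{−t/a_n} ≥ exp( − (1−α) ∑_{n≥1} α^{n−1} t / a_n ), where the last bound is interpreted as trivially true if ∑_{n≥1} α^{n−1} / a_n = ∞. -/

import Mathlib

open MeasureTheory ProbabilityTheory Filter Topology

theorem stmt15 (Ω : Type) (_mΩ : MeasurableSpace Ω) (P : Measure Ω)
    [IsProbabilityMeasure P]
    (α : ℝ) (κ θ : ℕ → Ω → ℝ) (a : ℕ → ℝ)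
    (hα0 : 0 ≤ α) (hα1 : α < 1)
    (hκm : ∀ n, Measurable (κ n)) (hθm : ∀ n, Measurable (θ n))
    (hindep : iIndepFun (Sum.elim κ θ) P)
    (hκ01 : ∀ n ω, κ n ω = 0 ∨ κ n ω = 1)
    (hκα : ∀ n, P {ω | κ n ω = 0} = ENNReal.ofReal α)
    (hθexp : ∀ n t, 0 ≤ t → P {ω | t < θ n ω} = ENNReal.ofReal (Real.exp (-t)))
    (hapos : ∀ n, 0 < a n) (hmono : Antitone a)
    (hsum : Summable a)
    (t : ℝ) (ht : 0 ≤ t) :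
    ENNReal.ofReal (∑' n, (1 - α) * α ^ n * Real.exp (-t / a n))
      ≤ P {ω | t ≤ ∑' n, a n * κ n ω * θ n ω} ∧
    ((Summable fun n => α ^ n * (t / a n)) →
      Real.exp (-((1 - α) * ∑' n, α ^ n * (t / a n)))
        ≤ ∑' n, (1 - α) * α ^ n * Real.exp (-t / a n)) := by
  classical
  have h1α : (0:ℝ) ≤ 1 - α := by linarith
  -- summability of the real series on the RHS of part 1
  have hg : Summable (fun n => (1 - α) * α ^ n) :=
    (summable_geometric_of_lt_one hα0 hα1).mul_left _
  have hR : Summable (fun n => (1 - α) * α ^ n * Real.exp (-t / a n)) := by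
    refine Summable.of_nonneg_of_le (fun n => ?_) (fun n => ?_) hg
    · positivity
    · have hle1 : Real.exp (-t / a n) ≤ 1 := by
        rw [Real.exp_le_one_iff, neg_div]
        simp only [neg_nonpos]
        exact div_nonneg ht (hapos n).le
      calc (1 - α) * α ^ n * Real.exp (-t / a n) ≤ (1 - α) * α ^ n * 1 :=
            mul_le_mul_of_nonneg_left hle1 (by positivity)
        _ = (1 - α) * α ^ n := mul_one _
  constructor
  · -- Part 1
    -- a.s. positivity of θ and its expectation
    have hθbasic : ∀ n, (∀ᵐ ω ∂P, 0 < θ n ω) ∧ ∫⁻ ω, ENNReal.ofReal (θ n ω) ∂P = 1 := by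
      intro n
      have h0 := hθexp n 0 le_rfl
      simp only [neg_zero, Real.exp_zero, ENNReal.ofReal_one] at h0
      have hms : MeasurableSet {ω | (0:ℝ) < θ n ω} := measurableSet_lt measurable_const (hθm n)
      have hpos : ∀ᵐ ω ∂P, 0 < θ n ω := by
        rw [ae_iff]
        have he : {ω | ¬ (0:ℝ) < θ n ω} = {ω | (0:ℝ) < θ n ω}ᶜ := by ext ω; simp
        rw [he, measure_compl hms (measure_ne_top _ _), h0, measure_univ, tsub_self]
      refine ⟨hpos, ?_⟩
      rw [lintegral_eq_lintegral_meas_lt P (hpos.mono fun ω h => h.le) (hθm n).aemeasurable]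
      rw [setLIntegral_congr_fun measurableSet_Ioi
        (fun s (hs : s ∈ Set.Ioi (0:ℝ)) => hθexp n s (le_of_lt hs))]
      rw [← ofReal_integral_eq_lintegral_ofReal]
      · rw [integral_exp_neg_Ioi_zero, ENNReal.ofReal_one]
      · exact (by simpa using exp_neg_integrableOn_Ioi 0 one_pos :
          IntegrableOn (fun x : ℝ => Real.exp (-x)) (Set.Ioi 0))
      · exact ae_of_all _ fun s => (Real.exp_pos _).le
    -- the a.s. good set
    have hG : ∀ᵐ ω ∂P, (∀ n, 0 < θ n ω) ∧ Summable (fun n => a n * κ n ω * θ n ω) := by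
      have hθall : ∀ᵐ ω ∂P, ∀ n, 0 < θ n ω := ae_all_iff.mpr fun n => (hθbasic n).1
      have hmes : ∀ n, Measurable (fun ω => ENNReal.ofReal (a n * κ n ω * θ n ω)) :=
        fun n => ((measurable_const.mul (hκm n)).mul (hθm n)).ennreal_ofReal
      have hfin : ∀ᵐ ω ∂P, (∑' n, ENNReal.ofReal (a n * κ n ω * θ n ω)) < ⊤ := by
        refine ae_lt_top (Measurable.ennreal_tsum hmes) ?_
        rw [lintegral_tsum (fun n => (hmes n).aemeasurable)]
        have hb : ∀ n, ∫⁻ ω, ENNReal.ofReal (a n * κ n ω * θ n ω) ∂P ≤ ENNReal.ofReal (a n) := by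
          intro n
          have hpt : ∀ ω, ENNReal.ofReal (a n * κ n ω * θ n ω)
              ≤ ENNReal.ofReal (a n) * ENNReal.ofReal (θ n ω) := by
            intro ω
            rcases hκ01 n ω with h | h
            · simp [h]
            · rw [h, mul_one, ENNReal.ofReal_mul (hapos n).le]
          calc ∫⁻ ω, ENNReal.ofReal (a n * κ n ω * θ n ω) ∂P
              ≤ ∫⁻ ω, ENNReal.ofReal (a n) * ENNReal.ofReal (θ n ω) ∂P := lintegral_mono hpt
            _ = ENNReal.ofReal (a n) * ∫⁻ ω, ENNReal.ofReal (θ n ω) ∂P :=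
                lintegral_const_mul _ ((hθm n).ennreal_ofReal)
            _ = ENNReal.ofReal (a n) := by rw [(hθbasic n).2, mul_one]
        refine ne_top_of_le_ne_top (b := ENNReal.ofReal (∑' n, a n)) ENNReal.ofReal_ne_top ?_
        calc ∑' n, ∫⁻ ω, ENNReal.ofReal (a n * κ n ω * θ n ω) ∂P
            ≤ ∑' n, ENNReal.ofReal (a n) := ENNReal.tsum_le_tsum hb
          _ = ENNReal.ofReal (∑' n, a n) :=
              (ENNReal.ofReal_tsum_of_nonneg (fun n => (hapos n).le) hsum).symm
      filter_upwards [hfin, hθall] with ω h1 h2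
      refine ⟨h2, ?_⟩
      have hnn : ∀ n, 0 ≤ a n * κ n ω * θ n ω := by
        intro n
        rcases hκ01 n ω with h | h
        · simp [h]
        · rw [h, mul_one]
          exact mul_nonneg (hapos n).le (h2 n).le
      exact (ENNReal.summable_toReal h1.ne).congr fun n => ENNReal.toReal_ofReal (hnn n)
    -- the events
    set E : ℕ → Set Ω :=
      fun n => {ω | (∀ k < n, κ k ω = 0) ∧ κ n ω = 1 ∧ t / a n < θ n ω} with hE
    have hPE : ∀ n, P (E n) = ENNReal.ofReal ((1 - α) * α ^ n * Real.exp (-t / a n)) := by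
      intro n
      set sets : (n' : ℕ ⊕ ℕ) → Set ℝ :=
        Sum.elim (fun k => if k = n then {1} else {0}) (fun _ => Set.Ioi (t / a n)) with hsets
      set S : Finset (ℕ ⊕ ℕ) := Finset.image Sum.inl (Finset.range (n+1)) ∪ {Sum.inr n} with hS
      have hmeas : ∀ i ∈ S, MeasurableSet (sets i) := by
        rintro (k | k) _
        · simp only [hsets, Sum.elim_inl]
          split <;> exact measurableSet_singleton _
        · exact measurableSet_Ioi
      have hprod := hindep.measure_inter_preimage_eq_mul S hmeas
      have hset : (⋂ i ∈ S, Sum.elim κ θ i ⁻¹' sets i) = E n := by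
        ext ω
        simp only [Set.mem_iInter, hS, Finset.mem_union, Finset.mem_image, Finset.mem_range,
          Finset.mem_singleton, hE, Set.mem_setOf_eq]
        constructor
        · intro h
          refine ⟨fun k hk => ?_, ?_, ?_⟩
          · have := h (Sum.inl k) (Or.inl ⟨k, Nat.lt_succ_of_lt hk, rfl⟩)
            simpa [hsets, Nat.ne_of_lt hk] using this
          · have := h (Sum.inl n) (Or.inl ⟨n, Nat.lt_succ_self n, rfl⟩)
            simpa [hsets] using this
          · have := h (Sum.inr n) (Or.inr rfl)
            simpa [hsets] using this
        · rintro ⟨h0, h1, h2⟩ i hi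
          rcases hi with ⟨k, hk, rfl⟩ | rfl
          · by_cases hkn : k = n
            · subst hkn; simpa [hsets] using h1
            · have hklt : k < n := lt_of_le_of_ne (Nat.lt_succ_iff.mp hk) hkn
              simpa [hsets, hkn] using h0 k hklt
          · simpa [hsets] using h2
      rw [hset] at hprod
      rw [hprod]
      have hdisjS : Disjoint (Finset.image Sum.inl (Finset.range (n+1)))
          ({Sum.inr n} : Finset (ℕ ⊕ ℕ)) := by
        simp [Finset.disjoint_singleton_right]
      rw [hS, Finset.prod_union hdisjS, Finset.prod_singleton,
        Finset.prod_image (fun x _ y _ h => Sum.inl.inj h)]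
      have hκpre : ∀ k, (Sum.elim κ θ (Sum.inl k)) ⁻¹' (sets (Sum.inl k))
          = if k = n then {ω | κ k ω = 1} else {ω | κ k ω = 0} := by
        intro k
        split <;> (ext ω; simp [hsets, *])
      have hκ1 : P {ω | κ n ω = 1} = ENNReal.ofReal (1 - α) := by
        have hc : {ω | κ n ω = 1} = {ω | κ n ω = 0}ᶜ := by
          ext ω; rcases hκ01 n ω with h | h <;> simp [h]
        have hms : MeasurableSet {ω | κ n ω = 0} := hκm n (measurableSet_singleton 0)
        rw [hc, measure_compl hms (measure_ne_top _ _), hκα n, measure_univ,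
          ENNReal.ofReal_sub 1 hα0, ENNReal.ofReal_one]
      have hθpre : P ((Sum.elim κ θ (Sum.inr n)) ⁻¹' (sets (Sum.inr n)))
          = ENNReal.ofReal (Real.exp (-(t / a n))) := by
        have hpe : (Sum.elim κ θ (Sum.inr n)) ⁻¹' (sets (Sum.inr n))
            = {ω | t / a n < θ n ω} := by
          ext ω; simp [hsets]
        rw [hpe, hθexp n _ (div_nonneg ht (hapos n).le)]
      rw [hθpre, Finset.prod_range_succ]
      have hstep : ∀ k ∈ Finset.range n,
          P ((Sum.elim κ θ (Sum.inl k)) ⁻¹' (sets (Sum.inl k))) = ENNReal.ofReal α := by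
        intro k hk
        rw [hκpre k, if_neg (Nat.ne_of_lt (Finset.mem_range.mp hk)), hκα k]
      rw [Finset.prod_congr rfl hstep, Finset.prod_const, Finset.card_range,
        hκpre n, if_pos rfl, hκ1]
      rw [← ENNReal.ofReal_pow hα0, ← ENNReal.ofReal_mul (pow_nonneg hα0 n),
        ← ENNReal.ofReal_mul (mul_nonneg (pow_nonneg hα0 n) h1α)]
      congr 1
      rw [neg_div]
      ring
    have hEmeas : ∀ n, MeasurableSet (E n) := by
      intro n
      have he : E n = (⋂ k ∈ Finset.range n, (κ k) ⁻¹' {0})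
          ∩ ((κ n) ⁻¹' {1} ∩ (θ n) ⁻¹' Set.Ioi (t / a n)) := by
        ext ω
        simp [hE, Finset.mem_range, and_assoc]
      rw [he]
      exact MeasurableSet.inter
        (MeasurableSet.biInter (Set.to_countable _)
          fun k _ => hκm k (measurableSet_singleton 0))
        ((hκm n (measurableSet_singleton 1)).inter (hθm n measurableSet_Ioi))
    have hdisj : Pairwise (Function.onFun Disjoint E) := by
      have key : ∀ m n, m < n → Disjoint (E m) (E n) := by
        intro m n hmn
        rw [Set.disjoint_left]
        rintro ω ⟨_, h1, _⟩ ⟨h0', _, _⟩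
        have h := h0' m hmn
        rw [h1] at h
        norm_num at h
      intro m n hmn
      rcases hmn.lt_or_gt with h | h
      · exact key m n h
      · exact (key n m h).symm
    have hsub : (⋃ n, E n) ⊆ {ω | t ≤ ∑' n, a n * κ n ω * θ n ω}
        ∪ {ω | (∀ n, 0 < θ n ω) ∧ Summable (fun n => a n * κ n ω * θ n ω)}ᶜ := by
      intro ω hω
      by_cases hg' : (∀ n, 0 < θ n ω) ∧ Summable (fun n => a n * κ n ω * θ n ω)
      · left
        obtain ⟨n, h0, h1, h2⟩ := Set.mem_iUnion.mp hω
        obtain ⟨hθp, hsumm⟩ := hg'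
        have hnn : ∀ m, 0 ≤ a m * κ m ω * θ m ω := by
          intro m
          rcases hκ01 m ω with h | h
          · simp [h]
          · rw [h, mul_one]
            exact mul_nonneg (hapos m).le (hθp m).le
        have hterm : t ≤ a n * κ n ω * θ n ω := by
          rw [h1, mul_one]
          have heq : a n * (t / a n) = t :=
            mul_div_cancel₀ t (hapos n).ne'
          calc t = a n * (t / a n) := heq.symm
            _ ≤ a n * θ n ω := mul_le_mul_of_nonneg_left h2.le (hapos n).le
        exact hterm.trans (Summable.le_tsum hsumm n fun m _ => hnn m)
      · right
        exact hg'
    have hGc : P ({ω | (∀ n, 0 < θ n ω) ∧ Summable (fun n => a n * κ n ω * θ n ω)}ᶜ) = 0 := by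
      have := ae_iff.mp hG
      simpa [Set.compl_setOf] using this
    calc ENNReal.ofReal (∑' n, (1 - α) * α ^ n * Real.exp (-t / a n))
        = ∑' n, ENNReal.ofReal ((1 - α) * α ^ n * Real.exp (-t / a n)) :=
          ENNReal.ofReal_tsum_of_nonneg (fun n => by positivity) hR
      _ = ∑' n, P (E n) := tsum_congr fun n => (hPE n).symm
      _ = P (⋃ n, E n) := (measure_iUnion hdisj hEmeas).symm
      _ ≤ P ({ω | t ≤ ∑' n, a n * κ n ω * θ n ω}
            ∪ {ω | (∀ n, 0 < θ n ω) ∧ Summable (fun n => a n * κ n ω * θ n ω)}ᶜ) :=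
          measure_mono hsub
      _ ≤ P {ω | t ≤ ∑' n, a n * κ n ω * θ n ω}
            + P ({ω | (∀ n, 0 < θ n ω) ∧ Summable (fun n => a n * κ n ω * θ n ω)}ᶜ) :=
          measure_union_le _ _
      _ = P {ω | t ≤ ∑' n, a n * κ n ω * θ n ω} := by rw [hGc, add_zero]
  · -- Part 2
    intro hs
    set c : ℝ := -((1 - α) * ∑' n, α ^ n * (t / a n)) with hc
    have hw : ∑' n, (1 - α) * α ^ n = 1 := by
      rw [tsum_mul_left, tsum_geometric_of_lt_one hα0 hα1]
      exact mul_inv_cancel₀ (by linarith)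
    have hL : Summable (fun n => (1 - c) * ((1 - α) * α ^ n) - (1 - α) * (α ^ n * (t / a n))) :=
      (hg.mul_left _).sub (hs.mul_left _)
    have hsum1 : ∑' n, ((1 - c) * ((1 - α) * α ^ n) - (1 - α) * (α ^ n * (t / a n))) = 1 := by
      rw [Summable.tsum_sub (hg.mul_left _) (hs.mul_left _), tsum_mul_left, tsum_mul_left,
        tsum_mul_left, tsum_geometric_of_lt_one hα0 hα1,
        mul_inv_cancel₀ (by linarith : (1:ℝ) - α ≠ 0), hc]
      ring
    have key : ∀ n, Real.exp c * ((1 - c) * ((1 - α) * α ^ n) - (1 - α) * (α ^ n * (t / a n)))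
        ≤ (1 - α) * α ^ n * Real.exp (-t / a n) := by
      intro n
      have h1 : 1 + (-t / a n - c) ≤ Real.exp (-t / a n - c) := by
        have := Real.add_one_le_exp (-t / a n - c); linarith
      have h2 : Real.exp c * (1 + (-t / a n - c)) ≤ Real.exp c * Real.exp (-t / a n - c) :=
        mul_le_mul_of_nonneg_left h1 (Real.exp_pos c).le
      rw [← Real.exp_add] at h2
      have h3 : c + (-t / a n - c) = -t / a n := by ring
      rw [h3] at h2
      have h4 : (1 - α) * α ^ n * (Real.exp c * (1 + (-t / a n - c)))
          ≤ (1 - α) * α ^ n * Real.exp (-t / a n) :=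
        mul_le_mul_of_nonneg_left h2 (by positivity)
      calc Real.exp c * ((1 - c) * ((1 - α) * α ^ n) - (1 - α) * (α ^ n * (t / a n)))
          = (1 - α) * α ^ n * (Real.exp c * (1 + (-t / a n - c))) := by
            field_simp
            ring
        _ ≤ _ := h4
    calc Real.exp c = Real.exp c * 1 := (mul_one _).symm
      _ = Real.exp c * ∑' n, ((1 - c) * ((1 - α) * α ^ n) - (1 - α) * (α ^ n * (t / a n))) := by
          rw [hsum1]
      _ = ∑' n, Real.exp c * ((1 - c) * ((1 - α) * α ^ n) - (1 - α) * (α ^ n * (t / a n))) :=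
          (tsum_mul_left).symm
      _ ≤ ∑' n, (1 - α) * α ^ n * Real.exp (-t / a n) :=
          Summable.tsum_le_tsum key (hL.mul_left _) hR
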